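/- At most linear growth of the maximal displacement (Proposition 2): Define Max_n = max_{v∈T_n} |X_v|. For every t > 0 with ϑ₁(t) = ∫_G e^{t|x|} dμ(x) < ∞ and every a > log(ρ·ϑ₁(t))/t, one has limsup_{n→∞} Max_n/n ≤ a almost surely. In particular there exists a > 0 such that limsup_{n→∞} Max_n/n ≤ a almost surely. -/

import Mathlib

open MeasureTheory ProbabilityTheory Filter
open scoped Topology ENNReal Classical

namespace BRWPaper

/-- Level `n` of the Galton–Watson tree encoded by Ulam–Harris labels: the root is the empty
list, and the children of a vertex `v` are the labels `v ++ [j]` for `j < N v`, where `N v` is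
the offspring number of `v`. -/
def level (N : List ℕ → ℕ) : ℕ → Finset (List ℕ)
  | 0 => {([] : List ℕ)}
  | n + 1 => (level N n).biUnion fun v => (Finset.range (N v)).image fun j => v ++ [j]

/-- Position of the particle with label `v = (v₁, …, vₙ)`:
`X_v = ξ_{(v₁)} · ξ_{(v₁,v₂)} ⋯ ξ_{(v₁,…,vₙ)}` (ordered product of the steps along `v`). -/
def pos {G : Type*} [Group G] (ξ : List ℕ → G) (v : List ℕ) : G :=
  ((List.range v.length).map fun i => ξ (v.take (i + 1))).prod

/-- The single-particle walk `Y_n = ξ'₁ ⋯ ξ'ₙ`. -/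
def walk {G : Type*} [Group G] (ξ : ℕ → G) (n : ℕ) : G :=
  ((List.range n).map fun i => ξ (i + 1)).prod

/-- The family of σ-algebras generated by the offspring numbers `N v` and the steps `ξ v`.
Joint independence of this family (together with the laws `N v ∼ π`, `ξ v ∼ μ`) realizes the
product measure `(⨂_v π) ⊗ (⨂_v μ)` of the paper. -/
def famSigma {Ω G : Type*} [MeasurableSpace G] (N : List ℕ → Ω → ℕ) (ξ : List ℕ → Ω → G) :
    List ℕ ⊕ List ℕ → MeasurableSpace Ω :=
  Sum.elim (fun v => MeasurableSpace.comap (N v) inferInstance)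
    (fun v => MeasurableSpace.comap (ξ v) inferInstance)

/-- The distribution function `Φ` of the standard normal distribution. -/
noncomputable def stdGaussCDF (x : ℝ) : ℝ := (gaussianReal 0 1 (Set.Iic x)).toReal

/-- The maximal displacement `Maxₙ = max_{v ∈ Tₙ} |X_v|` (with the convention that the
maximum of the empty set is `0`). -/
noncomputable def maxDisp {G : Type*} [Group G] (nm : G → ℝ) (N : List ℕ → ℕ)
    (ξ : List ℕ → G) (n : ℕ) : ℝ :=
  WithBot.unbotD 0 (((level N n).image fun v => nm (pos ξ v)).max)




theorem mem_level_iff (N : List ℕ → ℕ) (n : ℕ) (v : List ℕ) :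
    v ∈ level N n ↔ v.length = n ∧ ∀ i < n, v.getD i 0 < N (v.take i) := by
  induction n generalizing v with
  | zero =>
    simp [level, List.length_eq_zero_iff]
  | succ n ih =>
    simp only [level, Finset.mem_biUnion, Finset.mem_image, Finset.mem_range]
    constructor
    · rintro ⟨u, hu, j, hj, rfl⟩
      obtain ⟨hlen, hcond⟩ := (ih u).1 hu
      refine ⟨by simp [hlen], fun i hi => ?_⟩
      rcases Nat.lt_succ_iff_lt_or_eq.1 hi with hi' | rfl
      · rw [List.getD_append _ _ _ _ (by omega), List.take_append_of_le_length (by omega)]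
        exact hcond i hi'
      · rw [← hlen] at *
        rw [List.getD_append_right _ _ _ _ (le_refl _), List.take_left]
        simpa using hj
    · rintro ⟨hlen, hcond⟩
      rcases v.eq_nil_or_concat with rfl | ⟨u, j, rfl⟩
      · simp at hlen
      · simp only [List.concat_eq_append] at hlen hcond ⊢
        have hlen' : u.length = n := by simpa using hlen
        refine ⟨u, (ih _).2 ⟨hlen', fun i hi => ?_⟩, j, ?_, rfl⟩
        · have h1 := hcond i (by omega)
          rwa [List.getD_append _ _ _ _ (by omega),
            List.take_append_of_le_length (by omega)] at h1
        · have h1 := hcond n (by omega)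
          rw [← hlen'] at h1
          rwa [List.getD_append_right _ _ _ _ (le_refl _), List.take_left, Nat.sub_self,
            List.getD_cons_zero] at h1

theorem tsum_list_prod_digits (c : ℕ → ℝ≥0∞) (n : ℕ) :
    ∑' v : List ℕ, (if v.length = n then ∏ i ∈ Finset.range n, c (v.getD i 0) else 0)
      = (∑' j, c j) ^ n := by
  induction n with
  | zero =>
    rw [pow_zero, tsum_eq_single ([] : List ℕ) (fun v hv => by
      simp only [ne_eq, ← List.length_eq_zero_iff] at hv
      simp [hv])]
    simp
  | succ n ih =>
    have hinj : Function.Injective (fun p : ℕ × List ℕ => p.1 :: p.2) := by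
      intro p q h
      simp only [List.cons.injEq] at h
      exact Prod.ext h.1 h.2
    rw [← Function.Injective.tsum_eq hinj (fun v hv => ?_)]
    · have : ∀ p : ℕ × List ℕ,
          (if (p.1 :: p.2).length = n + 1 then
            ∏ i ∈ Finset.range (n + 1), c ((p.1 :: p.2).getD i 0) else 0)
          = c p.1 * (if p.2.length = n then ∏ i ∈ Finset.range n, c (p.2.getD i 0) else 0) := by
        intro p
        by_cases h : p.2.length = n
        · rw [if_pos (by simp [h]), if_pos h, Finset.prod_range_succ']
          simp [mul_comm]
        · rw [if_neg (by simp [h]), if_neg h, mul_zero]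
      simp only [this]
      rw [ENNReal.tsum_prod']
      simp_rw [ENNReal.tsum_mul_left]
      rw [ENNReal.tsum_mul_right, ih, pow_succ, mul_comm]
    · rcases v with _ | ⟨j, u⟩
      · simp at hv
      · exact ⟨(j, u), rfl⟩

theorem tsum_Ioi_eq (π : Measure ℕ) [IsProbabilityMeasure π] (ρ : ℝ)
    (hρ : HasSum (fun k : ℕ => (k : ℝ) * (π {k}).toReal) ρ) :
    ∑' j : ℕ, π (Set.Ioi j) = ENNReal.ofReal ρ := by
  have h1 : ∀ j : ℕ, π (Set.Ioi j) = ∑' k : ℕ, (Set.Ioi j).indicator (fun k => π {k}) k := by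
    intro j
    rw [← tsum_subtype]
    have := tsum_measure_preimage_singleton (μ := π) (Set.to_countable (Set.Ioi j))
      (f := id) (fun y _ => measurableSet_singleton y |>.preimage measurable_id)
    simpa using this.symm
  simp_rw [h1]
  rw [ENNReal.tsum_comm]
  have h2 : ∀ k : ℕ, (∑' j : ℕ, (Set.Ioi j).indicator (fun k => π {k}) k)
      = (k : ℝ≥0∞) * π {k} := by
    intro k
    rw [tsum_eq_sum (s := Finset.range k) (fun j hj => Set.indicator_of_notMem (by
      simp only [Finset.mem_range, not_lt] at hj
      simp only [Set.mem_Ioi, not_lt]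
      omega) _)]
    rw [Finset.sum_congr rfl (fun j hj => by
      simp only [Finset.mem_range] at hj
      rw [Set.indicator_of_mem (Set.mem_Ioi.2 hj)])]
    simp [mul_comm]
  simp_rw [h2]
  have h3 : ∀ k : ℕ, (k : ℝ≥0∞) * π {k} = ENNReal.ofReal ((k : ℝ) * (π {k}).toReal) := by
    intro k
    rw [ENNReal.ofReal_mul (Nat.cast_nonneg k), ENNReal.ofReal_natCast,
      ENNReal.ofReal_toReal (measure_ne_top π _)]
  simp_rw [h3]
  rw [← ENNReal.ofReal_tsum_of_nonneg (fun k => mul_nonneg (Nat.cast_nonneg k)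
    ENNReal.toReal_nonneg) hρ.summable, hρ.tsum_eq]

theorem iIndep_lintegral_prod {ι Ω : Type*} {mΩ : MeasurableSpace Ω} {P : Measure Ω}
    [IsProbabilityMeasure P]
    {m : ι → MeasurableSpace Ω} (h_le : ∀ i, m i ≤ mΩ) (h : iIndep m P)
    (s : Finset ι) (f : ι → Ω → ℝ≥0∞) (hf : ∀ i ∈ s, Measurable[m i] (f i)) :
    ∫⁻ ω, ∏ i ∈ s, f i ω ∂P = ∏ i ∈ s, ∫⁻ ω, f i ω ∂P := by
  classical
  induction s using Finset.induction_on with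
  | empty => simp
  | @insert i s his ih =>
    simp only [Finset.prod_insert his]
    have h1 : Measurable[⨆ j ∈ ({i} : Set ι), m j] (f i) := by
      refine (hf i (Finset.mem_insert_self _ _)).mono ?_ le_rfl
      exact le_biSup m rfl
    have h2 : Measurable[⨆ j ∈ (↑s : Set ι), m j] (fun ω => ∏ j ∈ s, f j ω) := by
      refine Finset.measurable_prod _ (fun j hj => ?_)
      exact (hf j (Finset.mem_insert_of_mem hj)).mono (le_biSup m hj) le_rfl
    have hind : Indep (⨆ j ∈ ({i} : Set ι), m j) (⨆ j ∈ (↑s : Set ι), m j) P :=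
      indep_iSup_of_disjoint h_le h (by simpa using his)
    rw [lintegral_mul_eq_lintegral_mul_lintegral_of_independent_measurableSpace
        (iSup₂_le fun j _ => h_le j) (iSup₂_le fun j _ => h_le j) hind h1 h2,
      ih (fun j hj => hf j (Finset.mem_insert_of_mem hj))]

theorem lintegral_pathweight {G Ω : Type*} [MeasurableSpace G] [MeasurableSpace Ω]
    (P : Measure Ω) [IsProbabilityMeasure P] (π : Measure ℕ) (μ : Measure G)
    (N : List ℕ → Ω → ℕ) (ξ : List ℕ → Ω → G)
    (hN_meas : ∀ v, Measurable (N v)) (hξ_meas : ∀ v, Measurable (ξ v))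
    (hN_law : ∀ v, Measure.map (N v) P = π) (hξ_law : ∀ v, Measure.map (ξ v) P = μ)
    (h_indep : iIndep (famSigma N ξ) P)
    (w : G → ℝ≥0∞) (hw : Measurable w)
    (n : ℕ) (v : List ℕ) (hv : v.length = n) :
    ∫⁻ ω, ({ω | ∀ i < n, v.getD i 0 < N (v.take i) ω} : Set Ω).indicator (1 : Ω → ℝ≥0∞) ω
        * ∏ i ∈ Finset.range n, w (ξ (v.take (i + 1)) ω) ∂P
      = (∏ i ∈ Finset.range n, π (Set.Ioi (v.getD i 0))) * (∫⁻ x, w x ∂μ) ^ n := by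
  classical
  set A : ℕ → Set Ω := fun i => N (v.take i) ⁻¹' Set.Ioi (v.getD i 0) with hA
  have hlen_take : ∀ i, i ≤ n → (v.take i).length = i := fun i hi => by
    simp [List.length_take, hv, hi]
  have hind : ∀ ω, ({ω | ∀ i < n, v.getD i 0 < N (v.take i) ω} : Set Ω).indicator (1 : Ω → ℝ≥0∞) ω
      = ∏ i ∈ Finset.range n, (A i).indicator (1 : Ω → ℝ≥0∞) ω := by
    intro ω
    by_cases h : ∀ i < n, v.getD i 0 < N (v.take i) ω
    · rw [Set.indicator_of_mem (show ω ∈ {ω | ∀ i < n, v.getD i 0 < N (v.take i) ω} from h),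
        Finset.prod_eq_one]
      · simp
      · intro i hi
        rw [Set.indicator_of_mem (show ω ∈ A i from h i (Finset.mem_range.1 hi))]
        simp
    · rw [Set.indicator_of_notMem (show ω ∉ {ω | ∀ i < n, v.getD i 0 < N (v.take i) ω} from h)]
      push_neg at h
      obtain ⟨i, hi, hni⟩ := h
      rw [eq_comm]
      refine Finset.prod_eq_zero (Finset.mem_range.2 hi) ?_
      rw [Set.indicator_of_notMem (show ω ∉ A i from
        fun hmem => by have := Set.mem_Ioi.1 (Set.mem_preimage.1 hmem); omega)]
  set f : (List ℕ ⊕ List ℕ) → Ω → ℝ≥0∞ :=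
    Sum.elim (fun u ω => (N u ⁻¹' Set.Ioi (v.getD u.length 0)).indicator (1 : Ω → ℝ≥0∞) ω)
      (fun u ω => w (ξ u ω)) with hf
  set s1 : Finset (List ℕ ⊕ List ℕ) :=
    (Finset.range n).image (fun i => Sum.inl (v.take i)) with hs1
  set s2 : Finset (List ℕ ⊕ List ℕ) :=
    (Finset.range n).image (fun i => Sum.inr (v.take (i + 1))) with hs2
  have hinj1 : ∀ x ∈ Finset.range n, ∀ y ∈ Finset.range n,
      (Sum.inl (v.take x) : List ℕ ⊕ List ℕ) = Sum.inl (v.take y) → x = y := by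
    intro x hx y hy hxy
    have := congrArg (fun z : List ℕ ⊕ List ℕ => (z.getLeft?.getD []).length) hxy
    simpa [hlen_take x (Finset.mem_range.1 hx).le, hlen_take y (Finset.mem_range.1 hy).le]
      using this
  have hinj2 : ∀ x ∈ Finset.range n, ∀ y ∈ Finset.range n,
      (Sum.inr (v.take (x + 1)) : List ℕ ⊕ List ℕ) = Sum.inr (v.take (y + 1)) → x = y := by
    intro x hx y hy hxy
    have := congrArg (fun z : List ℕ ⊕ List ℕ => (z.getRight?.getD []).length) hxy
    simpa [hlen_take (x + 1) (Finset.mem_range.1 hx), hlen_take (y + 1) (Finset.mem_range.1 hy)]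
      using this
  have hdisj : Disjoint s1 s2 := by
    rw [Finset.disjoint_left]
    rintro x hx1 hx2
    simp only [hs1, hs2, Finset.mem_image] at hx1 hx2
    obtain ⟨i, -, rfl⟩ := hx1
    obtain ⟨j, -, h⟩ := hx2
    simp at h
  have hprod1 : ∀ ω, ∏ i ∈ s1, f i ω
      = ∏ i ∈ Finset.range n, (A i).indicator (1 : Ω → ℝ≥0∞) ω := by
    intro ω
    rw [hs1, Finset.prod_image hinj1]
    refine Finset.prod_congr rfl fun i hi => ?_
    simp only [hf, Sum.elim_inl, hlen_take i (Finset.mem_range.1 hi).le, hA]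
  have hprod2 : ∀ ω, ∏ i ∈ s2, f i ω = ∏ i ∈ Finset.range n, w (ξ (v.take (i + 1)) ω) := by
    intro ω
    rw [hs2, Finset.prod_image hinj2]
    rfl
  have h_le : ∀ i, famSigma N ξ i ≤ ‹MeasurableSpace Ω› := by
    rintro (u | u)
    · exact (hN_meas u).comap_le
    · exact (hξ_meas u).comap_le
  have hmeas : ∀ i ∈ s1 ∪ s2, Measurable[famSigma N ξ i] (f i) := by
    rintro (u | u) -
    · letI : MeasurableSpace Ω := famSigma N ξ (Sum.inl u)
      exact measurable_one.indicator ⟨Set.Ioi (v.getD u.length 0), trivial, rfl⟩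
    · exact hw.comp (Measurable.of_comap_le le_rfl)
  calc ∫⁻ ω, ({ω | ∀ i < n, v.getD i 0 < N (v.take i) ω} : Set Ω).indicator (1 : Ω → ℝ≥0∞) ω
        * ∏ i ∈ Finset.range n, w (ξ (v.take (i + 1)) ω) ∂P
      = ∫⁻ ω, ∏ i ∈ s1 ∪ s2, f i ω ∂P := by
        refine lintegral_congr fun ω => ?_
        rw [Finset.prod_union hdisj, hprod1, hprod2, hind]
    _ = ∏ i ∈ s1 ∪ s2, ∫⁻ ω, f i ω ∂P :=
        iIndep_lintegral_prod h_le h_indep _ f hmeas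
    _ = (∏ i ∈ s1, ∫⁻ ω, f i ω ∂P) * ∏ i ∈ s2, ∫⁻ ω, f i ω ∂P :=
        Finset.prod_union hdisj
    _ = (∏ i ∈ Finset.range n, π (Set.Ioi (v.getD i 0))) * (∫⁻ x, w x ∂μ) ^ n := by
        congr 1
        · rw [hs1, Finset.prod_image hinj1]
          refine Finset.prod_congr rfl fun i hi => ?_
          simp only [hf, Sum.elim_inl, hlen_take i (Finset.mem_range.1 hi).le]
          rw [lintegral_indicator_one ((hN_meas _) measurableSet_Ioi),
            ← Measure.map_apply (hN_meas _) trivial, hN_law]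
        · rw [hs2, Finset.prod_image hinj2]
          have hconst : ∀ i ∈ Finset.range n,
              ∫⁻ ω, f (Sum.inr (v.take (i + 1))) ω ∂P = ∫⁻ x, w x ∂μ := by
            intro i _
            simp only [hf, Sum.elim_inr]
            rw [← hξ_law (v.take (i + 1)), lintegral_map hw (hξ_meas _)]
          rw [Finset.prod_congr rfl hconst, Finset.prod_const, Finset.card_range]

theorem nm_list_prod {G : Type*} [Group G] (nm : G → ℝ) (hnm_one : nm 1 = 0)
    (hnm_mul : ∀ x y : G, nm (x * y) ≤ nm x + nm y) :
    ∀ l : List G, nm l.prod ≤ (l.map nm).sum := by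
  intro l
  induction l with
  | nil => simp [hnm_one]
  | cons x l ih =>
    simp only [List.prod_cons, List.map_cons, List.sum_cons]
    calc nm (x * l.prod) ≤ nm x + nm l.prod := hnm_mul _ _
      _ ≤ nm x + (l.map nm).sum := by linarith




/-- Proposition 2 (at most linear growth of the maximal displacement): for every `t > 0` with
`ϑ₁(t) = ∫ e^{t|x|} dμ < ∞` and every `a > log(ρ·ϑ₁(t))/t`, almost surely
`limsup Maxₙ/n ≤ a`; in particular there is some `a > 0` such that almost surely
`limsup Maxₙ/n ≤ a`. -/
theorem maximal_displacement_linear_growth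
    {G : Type*} [Group G] [MeasurableSpace G] [MeasurableMul₂ G]
    -- the norm on the group
    (nm : G → ℝ) (hnm_meas : Measurable nm)
    (hnm_one : nm 1 = 0) (hnm_inv : ∀ x : G, nm x⁻¹ = nm x)
    (hnm_mul : ∀ x y : G, nm (x * y) ≤ nm x + nm y)
    -- the offspring distribution: supercritical with finite second moment, no deaths
    (π : Measure ℕ) [IsProbabilityMeasure π] (hπ0 : π {0} = 0)
    (ρ θ : ℝ) (hρ : HasSum (fun k : ℕ => (k : ℝ) * (π {k}).toReal) ρ) (hρ1 : 1 < ρ)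
    (hθ : HasSum (fun k : ℕ => (k : ℝ) ^ 2 * (π {k}).toReal) θ)
    -- the step distribution, with a finite exponential moment
    (μ : Measure G) [IsProbabilityMeasure μ]
    (hexp : ∃ t > (0 : ℝ), ∫⁻ x, ENNReal.ofReal (Real.exp (t * nm x)) ∂μ < ⊤)
    -- the branching random walk: i.i.d. offspring numbers `N v ∼ π` and steps `ξ v ∼ μ`,
    -- all jointly independent
    {Ω : Type*} [MeasurableSpace Ω] (P : Measure Ω) [IsProbabilityMeasure P]
    (N : List ℕ → Ω → ℕ) (ξ : List ℕ → Ω → G)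
    (hN_meas : ∀ v, Measurable (N v)) (hξ_meas : ∀ v, Measurable (ξ v))
    (hN_law : ∀ v, Measure.map (N v) P = π) (hξ_law : ∀ v, Measure.map (ξ v) P = μ)
    (h_indep : iIndep (famSigma N ξ) P)
    :
    (∀ t a : ℝ, 0 < t → Integrable (fun x => Real.exp (t * nm x)) μ →
        Real.log (ρ * ∫ x, Real.exp (t * nm x) ∂μ) / t < a →
        ∀ᵐ ω ∂P, Filter.limsup
          (fun n : ℕ => maxDisp nm (fun v => N v ω) (fun u => ξ u ω) n / n) atTop ≤ a) ∧
    ∃ a > (0 : ℝ), ∀ᵐ ω ∂P, Filter.limsup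
      (fun n : ℕ => maxDisp nm (fun v => N v ω) (fun u => ξ u ω) n / n) atTop ≤ a := by
  classical
  have hnm0 : ∀ x : G, 0 ≤ nm x := by
    intro x
    have h := hnm_mul x x⁻¹
    rw [mul_inv_cancel, hnm_one, hnm_inv] at h
    linarith
  have hρ0 : (0:ℝ) < ρ := lt_trans one_pos hρ1
  have hmax0 : ∀ (Nf : List ℕ → ℕ) (ξf : List ℕ → G) (n : ℕ), 0 ≤ maxDisp nm Nf ξf n := by
    intro Nf ξf n
    unfold maxDisp
    cases hmax : (((level Nf n).image fun v => nm (pos ξf v)).max) with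
    | bot => simp
    | coe m =>
      obtain ⟨v, hv, hvm⟩ := Finset.mem_image.1 (Finset.mem_of_max hmax)
      simp only [WithBot.unbotD_coe]
      exact hvm ▸ hnm0 _
  have hϑge : ∀ t : ℝ, 0 < t → Integrable (fun x => Real.exp (t * nm x)) μ →
      1 ≤ ∫ x, Real.exp (t * nm x) ∂μ := by
    intro t ht hInt
    calc (1:ℝ) = ∫ _x, (1:ℝ) ∂μ := by simp
      _ ≤ ∫ x, Real.exp (t * nm x) ∂μ := by
          refine integral_mono (integrable_const 1) hInt (fun x => ?_)
          rw [← Real.exp_zero]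
          exact Real.exp_le_exp.2 (mul_nonneg ht.le (hnm0 x))
  have hmain : ∀ t a : ℝ, 0 < t → Integrable (fun x => Real.exp (t * nm x)) μ →
      Real.log (ρ * ∫ x, Real.exp (t * nm x) ∂μ) / t < a →
      ∀ᵐ ω ∂P, Filter.limsup
        (fun n : ℕ => maxDisp nm (fun v => N v ω) (fun u => ξ u ω) n / n) atTop ≤ a := by
    intro t a ht hInt ha
    set ϑᵣ : ℝ := ∫ x, Real.exp (t * nm x) ∂μ with hϑᵣdef
    set w : G → ℝ≥0∞ := fun x => ENNReal.ofReal (Real.exp (t * nm x)) with hwdef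
    have hw : Measurable w :=
      ENNReal.measurable_ofReal.comp (Real.measurable_exp.comp (hnm_meas.const_mul t))
    set ϑ : ℝ≥0∞ := ∫⁻ x, w x ∂μ with hϑdef
    have hϑ : ϑ = ENNReal.ofReal ϑᵣ :=
      (ofReal_integral_eq_lintegral_ofReal hInt
        (Eventually.of_forall fun x => (Real.exp_pos _).le)).symm
    have hϑᵣ1 : 1 ≤ ϑᵣ := hϑge t ht hInt
    have hρϑ1 : 1 < ρ * ϑᵣ := by nlinarith
    have ha0 : 0 < a :=
      lt_of_le_of_lt (div_nonneg (Real.log_nonneg hρϑ1.le) ht.le) ha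
    set g : ℕ → List ℕ → Ω → ℝ≥0∞ := fun n v ω =>
      (if v.length = n then
        ({ω | ∀ i < n, v.getD i 0 < N (v.take i) ω} : Set Ω).indicator (1 : Ω → ℝ≥0∞) ω else 0)
        * ∏ i ∈ Finset.range n, w (ξ (v.take (i + 1)) ω) with hgdef
    have hAset : ∀ (n : ℕ) (v : List ℕ),
        MeasurableSet {ω | ∀ i < n, v.getD i 0 < N (v.take i) ω} := by
      intro n v
      have : {ω | ∀ i < n, v.getD i 0 < N (v.take i) ω}
          = ⋂ i, ⋂ (_ : i < n), (N (v.take i)) ⁻¹' Set.Ioi (v.getD i 0) := by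
        ext ω; simp [Set.mem_iInter, Set.mem_preimage]
      rw [this]
      exact MeasurableSet.iInter fun i =>
        MeasurableSet.iInter fun _ => (hN_meas _) measurableSet_Ioi
    have hg_meas : ∀ n v, Measurable (g n v) := by
      intro n v
      refine Measurable.mul ?_ (Finset.measurable_prod _ fun i _ => hw.comp (hξ_meas _))
      split_ifs
      · exact measurable_one.indicator (hAset n v)
      · exact measurable_const
    set S : ℕ → Ω → ℝ≥0∞ := fun n ω => ∑' v : List ℕ, g n v ω with hSdef
    have hS_meas : ∀ n, Measurable (S n) := fun n => Measurable.ennreal_tsum (hg_meas n)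
    have hES : ∀ n, ∫⁻ ω, S n ω ∂P = (ENNReal.ofReal ρ * ϑ) ^ n := by
      intro n
      rw [hSdef, lintegral_tsum (fun v => (hg_meas n v).aemeasurable)]
      have hterm : ∀ v : List ℕ, ∫⁻ ω, g n v ω ∂P
          = (if v.length = n then ∏ i ∈ Finset.range n, π (Set.Ioi (v.getD i 0)) else 0)
            * ϑ ^ n := by
        intro v
        by_cases hv : v.length = n
        · rw [if_pos hv]
          have := lintegral_pathweight P π μ N ξ hN_meas hξ_meas hN_law hξ_law h_indep
            w hw n v hv
          simpa [hgdef, if_pos hv] using this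
        · simp [hgdef, hv]
      simp_rw [hterm]
      rw [ENNReal.tsum_mul_right, tsum_list_prod_digits (fun j => π (Set.Ioi j)) n,
        tsum_Ioi_eq π ρ hρ, mul_pow]
    set r : ℝ := ρ * ϑᵣ * Real.exp (-(t * a)) with hrdef
    have hr0 : 0 ≤ r := by positivity
    have hr1 : r < 1 := by
      have h1 : Real.log (ρ * ϑᵣ) < t * a := by
        rw [div_lt_iff₀ ht] at ha; linarith
      have h2 : ρ * ϑᵣ < Real.exp (t * a) := by
        rw [← Real.exp_log (show (0:ℝ) < ρ * ϑᵣ by positivity)]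
        exact Real.exp_lt_exp.2 h1
      calc r = ρ * ϑᵣ * Real.exp (-(t * a)) := rfl
        _ < Real.exp (t * a) * Real.exp (-(t * a)) :=
            mul_lt_mul_of_pos_right h2 (Real.exp_pos _)
        _ = 1 := by rw [← Real.exp_add]; simp
    have hbound : ∀ n : ℕ,
        P {ω | a * n < maxDisp nm (fun v => N v ω) (fun u => ξ u ω) n}
          ≤ ENNReal.ofReal (r ^ n) := by
      intro n
      set c : ℝ≥0∞ := ENNReal.ofReal (Real.exp (t * (a * n))) with hcdef
      have hc0 : c ≠ 0 := by
        simp only [hcdef, ne_eq, ENNReal.ofReal_eq_zero, not_le]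
        exact Real.exp_pos _
      have hctop : c ≠ ∞ := ENNReal.ofReal_ne_top
      have hincl : {ω | a * n < maxDisp nm (fun v => N v ω) (fun u => ξ u ω) n}
          ⊆ {ω | c ≤ S n ω} := by
        intro ω hω
        simp only [Set.mem_setOf_eq] at hω ⊢
        obtain ⟨v, hvlev, hvgt⟩ : ∃ v ∈ level (fun u => N u ω) n,
            a * n < nm (pos (fun u => ξ u ω) v) := by
          unfold maxDisp at hω
          cases hmax : (((level (fun u => N u ω) n).image
              fun v => nm (pos (fun u => ξ u ω) v)).max) with
          | bot =>
            rw [hmax] at hω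
            simp only [WithBot.unbotD_bot] at hω
            have : (0:ℝ) ≤ a * n := by positivity
            linarith
          | coe m =>
            rw [hmax, WithBot.unbotD_coe] at hω
            obtain ⟨v, hv, hvm⟩ := Finset.mem_image.1 (Finset.mem_of_max hmax)
            exact ⟨v, hv, hvm ▸ hω⟩
        obtain ⟨hvlen, hvcond⟩ := (mem_level_iff _ n v).1 hvlev
        have h2 : nm (pos (fun u => ξ u ω) v)
            ≤ ∑ i ∈ Finset.range n, nm (ξ (v.take (i + 1)) ω) := by
          have h3 := nm_list_prod nm hnm_one hnm_mul
            ((List.range v.length).map fun i => ξ (v.take (i + 1)) ω)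
          rw [List.map_map] at h3
          have heq : (((List.range v.length).map (nm ∘ fun i => ξ (v.take (i + 1)) ω))).sum
              = ∑ i ∈ Finset.range v.length, nm (ξ (v.take (i + 1)) ω) := rfl
          rw [heq, hvlen] at h3
          have h4 : pos (fun u => ξ u ω) v
              = ((List.range n).map fun i => ξ (v.take (i + 1)) ω).prod := by
            rw [pos, hvlen]
          rw [h4]
          exact h3
        have key : c ≤ g n v ω := by
          rw [hgdef]
          simp only [if_pos hvlen]
          rw [Set.indicator_of_mem
            (show ω ∈ {ω | ∀ i < n, v.getD i 0 < N (v.take i) ω} from hvcond)]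
          rw [Pi.one_apply, one_mul]
          calc c ≤ ENNReal.ofReal (Real.exp (t * nm (pos (fun u => ξ u ω) v))) := by
                rw [hcdef]
                exact ENNReal.ofReal_le_ofReal (Real.exp_le_exp.2
                  (mul_le_mul_of_nonneg_left hvgt.le ht.le))
            _ ≤ ENNReal.ofReal (∏ i ∈ Finset.range n, Real.exp (t * nm (ξ (v.take (i + 1)) ω))) := by
                refine ENNReal.ofReal_le_ofReal ?_
                rw [← Real.exp_sum]
                refine Real.exp_le_exp.2 ?_
                rw [← Finset.mul_sum]
                exact mul_le_mul_of_nonneg_left h2 ht.le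
            _ = ∏ i ∈ Finset.range n, w (ξ (v.take (i + 1)) ω) := by
                rw [ENNReal.ofReal_prod_of_nonneg (fun i _ => (Real.exp_pos _).le)]
        exact key.trans (ENNReal.le_tsum v)
      have hdiv : (ENNReal.ofReal ρ * ϑ) ^ n / c = ENNReal.ofReal (r ^ n) := by
        rw [hϑ, ← ENNReal.ofReal_mul hρ0.le, hcdef]
        have he1 : Real.exp (t * (a * ↑n)) = Real.exp (t * a) ^ n := by
          rw [← Real.exp_nat_mul]; ring_nf
        rw [he1, ← ENNReal.ofReal_pow (show (0:ℝ) ≤ ρ * ϑᵣ by nlinarith),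
          ← ENNReal.ofReal_div_of_pos (by positivity), ← div_pow]
        congr 2
        rw [hrdef, Real.exp_neg, div_eq_mul_inv]
      calc P {ω | a * n < maxDisp nm (fun v => N v ω) (fun u => ξ u ω) n}
          ≤ P {ω | c ≤ S n ω} := measure_mono hincl
        _ ≤ (∫⁻ ω, S n ω ∂P) / c :=
            meas_ge_le_lintegral_div (hS_meas n).aemeasurable hc0 hctop
        _ = ENNReal.ofReal (r ^ n) := by rw [hES n, hdiv]
    have hsum : (∑' n : ℕ,
        P {ω | a * n < maxDisp nm (fun v => N v ω) (fun u => ξ u ω) n}) ≠ ∞ := by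
      refine ne_top_of_le_ne_top ?_ (ENNReal.tsum_le_tsum hbound)
      rw [← ENNReal.ofReal_tsum_of_nonneg (fun n => pow_nonneg hr0 n)
        (summable_geometric_of_lt_one hr0 hr1)]
      exact ENNReal.ofReal_ne_top
    have hBC := measure_setOf_frequently_eq_zero
      (μ := P) (p := fun n ω => a * n < maxDisp nm (fun v => N v ω) (fun u => ξ u ω) n) hsum
    have hae : ∀ᵐ ω ∂P, ∀ᶠ n : ℕ in atTop,
        maxDisp nm (fun v => N v ω) (fun u => ξ u ω) n ≤ a * n := by
      rw [ae_iff]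
      have hseteq : {ω | ¬ ∀ᶠ n : ℕ in atTop,
          maxDisp nm (fun v => N v ω) (fun u => ξ u ω) n ≤ a * n}
          = {ω | ∃ᶠ n : ℕ in atTop,
            a * n < maxDisp nm (fun v => N v ω) (fun u => ξ u ω) n} := by
        ext ω
        simp [Filter.not_eventually, not_le, Filter.frequently_atTop]
      rw [hseteq]
      exact hBC
    filter_upwards [hae] with ω hω
    have hev : ∀ᶠ n : ℕ in atTop,
        maxDisp nm (fun v => N v ω) (fun u => ξ u ω) n / n ≤ a := by
      filter_upwards [hω, eventually_ge_atTop 1] with n h1 h2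
      have hn : (0:ℝ) < n := by
        have : (1:ℕ) ≤ n := h2
        exact_mod_cast Nat.lt_of_lt_of_le Nat.zero_lt_one this
      rw [div_le_iff₀ hn]
      linarith
    exact Filter.limsup_le_of_le (isCoboundedUnder_le_of_le atTop
      (fun n => div_nonneg (hmax0 _ _ n) (Nat.cast_nonneg n))) hev
  refine ⟨hmain, ?_⟩
  obtain ⟨t, ht, hfin⟩ := hexp
  have hInt : Integrable (fun x => Real.exp (t * nm x)) μ :=
    ⟨(Real.measurable_exp.comp (hnm_meas.const_mul t)).aestronglyMeasurable,
      (hasFiniteIntegral_iff_ofReal (Eventually.of_forall fun x => (Real.exp_pos _).le)).2 hfin⟩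
  refine ⟨Real.log (ρ * ∫ x, Real.exp (t * nm x) ∂μ) / t + 1, ?_, ?_⟩
  · have h1 : 1 ≤ ρ * ∫ x, Real.exp (t * nm x) ∂μ := by
      have := hϑge t ht hInt
      nlinarith
    have h2 : 0 ≤ Real.log (ρ * ∫ x, Real.exp (t * nm x) ∂μ) / t :=
      div_nonneg (Real.log_nonneg h1) ht.le
    linarith
  · exact hmain t _ ht hInt (by linarith)

end BRWPaper
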